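/- Every group that surjects onto ℤ² has exponential geodesic growth with respect to every finite symmetric generating set: if φ: G → ℤ² is surjective and X is any finite symmetric generating set of G, then there is b > 1 with Γ_{G,X}(n) ≥ bⁿ for all sufficiently large n. -/

import Mathlib

/-- A word `w` over the alphabet `X ⊆ G` is geodesic if its letters lie in `X` and no
shorter word over `X` represents the same element of `G`. -/
def IsGeodesicWord {G : Type*} [Group G] (X : Set G) (w : List G) : Prop :=
  (∀ a ∈ w, a ∈ X) ∧
    ∀ w' : List G, (∀ a ∈ w', a ∈ X) → w'.prod = w.prod → w.length ≤ w'.length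

/-- The geodesic growth function: the number of geodesic words over `X` of length at most `n`. -/
noncomputable def geodesicGrowth {G : Type*} [Group G] (X : Set G) (n : ℕ) : ℕ :=
  Set.ncard {w : List G | IsGeodesicWord X w ∧ w.length ≤ n}

/-- The word growth function: the number of elements of `G` represented by some word over `X`
of length at most `n`. -/
noncomputable def wordGrowth {G : Type*} [Group G] (X : Set G) (n : ℕ) : ℕ :=
  Set.ncard {g : G | ∃ w : List G, (∀ a ∈ w, a ∈ X) ∧ w.prod = g ∧ w.length ≤ n}


private def crossZ (u v : ℤ × ℤ) : ℤ := u.1 * v.2 - u.2 * v.1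

private def Reg (u : ℤ × ℤ) : Prop := u.1 < 0 ∨ (u.1 = 0 ∧ u.2 < 0)

private lemma cross_trans {u v w : ℤ × ℤ} (hu : Reg u) (hv : Reg v) (hw : Reg w)
    (h1 : 0 ≤ crossZ u v) (h2 : 0 ≤ crossZ v w) : 0 ≤ crossZ u w := by
  rcases hv with hv | ⟨hv1, hv2⟩
  · have key : crossZ u w * (-v.1) = crossZ u v * (-w.1) + crossZ v w * (-u.1) := by
      simp only [crossZ]; ring
    have hw1 : (0:ℤ) ≤ -w.1 := by rcases hw with h | ⟨h, _⟩ <;> omega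
    have hu1 : (0:ℤ) ≤ -u.1 := by rcases hu with h | ⟨h, _⟩ <;> omega
    nlinarith [mul_nonneg h1 hw1, mul_nonneg h2 hu1]
  · have h1' : (0:ℤ) ≤ u.1 * v.2 := by
      have : crossZ u v = u.1 * v.2 - u.2 * 0 := by rw [← hv1]; rfl
      simp only [this] at h1; linarith
    have hu1 : u.1 ≤ 0 := by nlinarith
    have h2' : (0:ℤ) ≤ -v.2 * w.1 := by
      have : crossZ v w = 0 * w.2 - v.2 * w.1 := by rw [← hv1]; rfl
      simp only [this] at h2; linarith
    have hw1 : w.1 ≤ 0 := by rcases hw with h | ⟨h,_⟩ <;> omega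
    have hw1' : w.1 = 0 := by nlinarith
    have hw2 : w.2 < 0 := by rcases hw with h | ⟨h,h'⟩ <;> omega
    have : crossZ u w = u.1 * w.2 := by simp [crossZ, hw1']
    rw [this]
    nlinarith

private lemma exists_min_cross (s : Finset (ℤ × ℤ)) (hne : s.Nonempty)
    (hreg : ∀ y ∈ s, Reg y) : ∃ b ∈ s, ∀ y ∈ s, 0 ≤ crossZ b y := by
  classical
  induction s using Finset.induction_on with
  | empty => exact absurd hne (by simp)
  | @insert c t hc ih =>
    rcases t.eq_empty_or_nonempty with rfl | htne
    · refine ⟨c, by simp, ?_⟩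
      intro y hy
      simp only [Finset.mem_insert, Finset.notMem_empty, or_false] at hy
      subst hy
      simp [crossZ]; ring_nf; omega
    · obtain ⟨b, hbt, hb⟩ := ih htne (fun y hy => hreg y (Finset.mem_insert_of_mem hy))
      by_cases h : 0 ≤ crossZ b c
      · refine ⟨b, Finset.mem_insert_of_mem hbt, ?_⟩
        intro y hy
        rcases Finset.mem_insert.mp hy with rfl | hy
        · exact h
        · exact hb y hy
      · refine ⟨c, Finset.mem_insert_self _ _, ?_⟩
        intro y hy
        have hcb : 0 ≤ crossZ c b := by
          have : crossZ c b = -crossZ b c := by simp [crossZ]; ring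
          omega
        rcases Finset.mem_insert.mp hy with rfl | hy
        · simp [crossZ]; ring_nf; omega
        · exact cross_trans (hreg c (Finset.mem_insert_self _ _))
            (hreg b (Finset.mem_insert_of_mem hbt))
            (hreg y (Finset.mem_insert_of_mem hy)) hcb (hb y hy)

private lemma key_lemma {G : Type*} [Group G] (φ : G →* Multiplicative (ℤ × ℤ))
    (hφ : Function.Surjective φ) (X : Finset G) (hsym : ∀ g ∈ X, g⁻¹ ∈ X)
    (hgen : Subgroup.closure (X : Set G) = ⊤) :
    ∃ (A B : G) (F : G → ℤ) (M : ℤ), A ∈ X ∧ B ∈ X ∧ A ≠ B ∧ 0 < M ∧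
      (∀ g h, F (g * h) = F g + F h) ∧ (∀ x ∈ X, F x ≤ M) ∧ F A = M ∧ F B = M := by
  classical
  set ψ : G → ℤ × ℤ := fun g => Multiplicative.toAdd (φ g) with hψdef
  have hψ : ∀ g h, ψ (g * h) = ψ g + ψ h := by
    intro g h; simp [hψdef, map_mul]
  have hψinv : ∀ g, ψ g⁻¹ = -ψ g := by
    intro g; simp [hψdef, map_inv]
  -- generation transfer
  have hYgen : ∀ K : AddSubgroup (ℤ × ℤ), (∀ x ∈ X, ψ x ∈ K) → ∀ v : ℤ × ℤ, v ∈ K := by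
    intro K hK v
    have hle : Subgroup.closure (X : Set G) ≤ Subgroup.comap φ (AddSubgroup.toSubgroup K) := by
      apply Subgroup.closure_le _ |>.mpr
      intro x hx
      exact hK x hx
    rw [hgen] at hle
    obtain ⟨g, hg⟩ := hφ (Multiplicative.ofAdd v)
    have hgm : φ g ∈ AddSubgroup.toSubgroup K := hle (Subgroup.mem_top g)
    have : Multiplicative.toAdd (φ g) ∈ K := hgm
    rwa [hg] at this
  -- some x with ψ x ≠ 0
  have hx0 : ∃ x ∈ X, ψ x ≠ 0 := by
    by_contra h
    push_neg at h
    have := hYgen ⊥ (fun x hx => by simp [h x hx]) (1, 0)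
    rw [AddSubgroup.mem_bot] at this
    exact one_ne_zero (congrArg Prod.fst this)
  set Y : Finset (ℤ × ℤ) := X.image ψ with hYdef
  have hYne : Y.Nonempty := by
    obtain ⟨x, hx, _⟩ := hx0
    exact ⟨ψ x, Finset.mem_image_of_mem ψ hx⟩
  have hnegY : ∀ y ∈ Y, -y ∈ Y := by
    intro y hy
    obtain ⟨x, hx, rfl⟩ := Finset.mem_image.mp hy
    rw [← hψinv]
    exact Finset.mem_image_of_mem ψ (hsym x hx)
  -- lex-maximal element a
  have hY1ne : (Y.image Prod.fst).Nonempty := hYne.image _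
  set m1 : ℤ := (Y.image Prod.fst).max' hY1ne with hm1def
  have hle1 : ∀ y ∈ Y, y.1 ≤ m1 := fun y hy =>
    Finset.le_max' _ _ (Finset.mem_image_of_mem _ hy)
  set Y1 : Finset (ℤ × ℤ) := Y.filter (fun y => y.1 = m1) with hY1def
  have hY1ne' : Y1.Nonempty := by
    obtain ⟨y, hy, hy1⟩ := Finset.mem_image.mp ((Y.image Prod.fst).max'_mem hY1ne)
    exact ⟨y, Finset.mem_filter.mpr ⟨hy, hy1⟩⟩
  have hY2ne : (Y1.image Prod.snd).Nonempty := hY1ne'.image _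
  set m2 : ℤ := (Y1.image Prod.snd).max' hY2ne with hm2def
  have hle2 : ∀ y ∈ Y, y.1 = m1 → y.2 ≤ m2 := fun y hy h1 =>
    Finset.le_max' _ _ (Finset.mem_image_of_mem _ (Finset.mem_filter.mpr ⟨hy, h1⟩))
  set a : ℤ × ℤ := (m1, m2) with hadef
  have haY : a ∈ Y := by
    obtain ⟨y, hy, hy2⟩ := Finset.mem_image.mp ((Y1.image Prod.snd).max'_mem hY2ne)
    have := Finset.mem_filter.mp hy
    have hya : y = a := Prod.ext this.2 hy2
    rw [← hya]; exact this.1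
  have hamax : ∀ y ∈ Y, y ≠ a → Reg (y - a) := by
    intro y hy hya
    rcases lt_or_eq_of_le (hle1 y hy) with h | h
    · left; simp only [hadef, Prod.fst_sub]; omega
    · right
      constructor
      · simp only [hadef, Prod.fst_sub]; omega
      · have h2 := hle2 y hy h
        have hne : y.2 ≠ m2 := fun hc => hya (Prod.ext h hc)
        simp only [hadef, Prod.snd_sub]; omega
  have ha0 : a ≠ 0 := by
    intro hc
    obtain ⟨x, hx, hxne⟩ := hx0
    have hy : ψ x ∈ Y := Finset.mem_image_of_mem ψ hx
    have hny : -ψ x ∈ Y := hnegY _ hy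
    have h1 : (ψ x).1 ≤ m1 := hle1 _ hy
    have h1' : -(ψ x).1 ≤ m1 := by simpa using hle1 _ hny
    have hm10 : m1 = 0 := congrArg Prod.fst hc
    have hm20 : m2 = 0 := congrArg Prod.snd hc
    have he1 : (ψ x).1 = m1 := by omega
    have h2 : (ψ x).2 ≤ m2 := hle2 _ hy he1
    have h2' : -(ψ x).2 ≤ m2 := by
      have hh : (-(ψ x)).1 = m1 := by simp only [Prod.fst_neg]; omega
      simpa using hle2 _ hny hh
    exact hxne (show ψ x = 0 by rw [Prod.ext_iff, Prod.fst_zero, Prod.snd_zero]; omega)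
  -- the second point b
  have hnaR : -a ∈ Y.erase a := by
    refine Finset.mem_erase.mpr ⟨?_, hnegY a haY⟩
    intro hc
    exact ha0 (by
      have h0 : a + a = 0 := by nth_rewrite 1 [← hc]; simp
      have h1 : m1 + m1 = 0 := congrArg Prod.fst h0
      have h2 : m2 + m2 = 0 := congrArg Prod.snd h0
      have hm1' : m1 = 0 := by omega
      have hm2' : m2 = 0 := by omega
      rw [hadef, hm1', hm2']; rfl)
  obtain ⟨d, hdmem, hdmin⟩ := exists_min_cross ((Y.erase a).image (fun y => y - a))
    ⟨-a - a, Finset.mem_image_of_mem _ hnaR⟩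
    (by
      intro z hz
      obtain ⟨y, hy, rfl⟩ := Finset.mem_image.mp hz
      have := Finset.mem_erase.mp hy
      exact hamax y this.2 this.1)
  obtain ⟨b, hbR, hbd⟩ := Finset.mem_image.mp hdmem
  have hbY : b ∈ Y := (Finset.mem_erase.mp hbR).2
  have hba : b ≠ a := (Finset.mem_erase.mp hbR).1
  have hmin : ∀ y ∈ Y.erase a, 0 ≤ crossZ (b - a) (y - a) := by
    intro y hy
    rw [hbd]
    exact hdmin _ (Finset.mem_image_of_mem _ hy)
  set M : ℤ := crossZ a (b - a) with hMdef
  have hfle : ∀ y ∈ Y, crossZ y (b - a) ≤ M := by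
    intro y hy
    by_cases hya : y = a
    · rw [hya]
    · have h := hmin y (Finset.mem_erase.mpr ⟨hya, hy⟩)
      have : crossZ y (b - a) - M = -crossZ (b - a) (y - a) := by
        simp only [crossZ, hMdef, Prod.fst_sub, Prod.snd_sub]; ring
      omega
  have hMnonneg : 0 ≤ M := by
    have := hfle (-a) (hnegY a haY)
    have hneg : crossZ (-a) (b - a) = -M := by
      simp only [crossZ, hMdef, Prod.fst_sub, Prod.snd_sub, Prod.fst_neg, Prod.snd_neg]; ring
    omega
  have hM0 : 0 < M := by
    rcases lt_or_eq_of_le hMnonneg with h | h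
    · exact h
    · exfalso
      have hzero : ∀ y ∈ Y, crossZ y (b - a) = 0 := by
        intro y hy
        have h1 := hfle y hy
        have h2 := hfle (-y) (hnegY y hy)
        have : crossZ (-y) (b - a) = -crossZ y (b - a) := by
          simp only [crossZ, Prod.fst_neg, Prod.snd_neg]; ring
        omega
      set dd := b - a with hdd
      have hdne : dd ≠ 0 := sub_ne_zero.mpr hba
      set K : AddSubgroup (ℤ × ℤ) := AddMonoidHom.ker
        (AddMonoidHom.mk' (fun v => crossZ v dd) (by
          intro u v
          simp only [crossZ, Prod.fst_add, Prod.snd_add]; ring)) with hKdef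
      have hall := hYgen K (fun x hx => by
        simp only [hKdef, AddMonoidHom.mem_ker, AddMonoidHom.mk'_apply]
        exact hzero (ψ x) (Finset.mem_image_of_mem ψ hx)) (dd.2, -dd.1)
      simp only [hKdef, AddMonoidHom.mem_ker, AddMonoidHom.mk'_apply] at hall
      have : dd.2 * dd.2 + dd.1 * dd.1 = 0 := by
        simp only [crossZ] at hall; linarith
      have h1 : dd.1 = 0 := by nlinarith
      have h2 : dd.2 = 0 := by nlinarith
      exact hdne (Prod.ext h1 h2)
  obtain ⟨A, hA, hAa⟩ := Finset.mem_image.mp haY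
  obtain ⟨B, hB, hBb⟩ := Finset.mem_image.mp hbY
  refine ⟨A, B, fun g => crossZ (ψ g) (b - a), M, hA, hB, ?_, hM0, ?_, ?_, ?_, ?_⟩
  · intro hc
    exact hba (by rw [← hBb, ← hc, hAa])
  · intro g h
    show crossZ (ψ (g * h)) (b - a) = crossZ (ψ g) (b - a) + crossZ (ψ h) (b - a)
    rw [hψ]
    simp only [crossZ, Prod.fst_add, Prod.snd_add]; ring
  · intro x hx
    exact hfle (ψ x) (Finset.mem_image_of_mem ψ hx)
  · show crossZ (ψ A) (b - a) = M
    rw [hAa]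
  · show crossZ (ψ B) (b - a) = M
    rw [hBb]
    simp only [crossZ, hMdef, Prod.fst_sub, Prod.snd_sub]; ring

theorem surjects_onto_Z2_implies_exponential_geodesic_growth {G : Type*} [Group G]
    (φ : G →* Multiplicative (ℤ × ℤ)) (hφ : Function.Surjective φ)
    (X : Finset G) (hsym : ∀ g ∈ X, g⁻¹ ∈ X)
    (hgen : Subgroup.closure (X : Set G) = ⊤) :
    ∃ b : ℝ, 1 < b ∧ ∃ N : ℕ, ∀ n ≥ N,
      b ^ n ≤ (geodesicGrowth (X : Set G) n : ℝ) := by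
  classical
  obtain ⟨A, B, F, M, hA, hB, hAB, hM, hFmul, hFle, hFA, hFB⟩ := key_lemma φ hφ X hsym hgen
  have hF1 : F 1 = 0 := by
    have := hFmul 1 1
    rw [one_mul] at this
    omega
  have hle : ∀ w : List G, (∀ a ∈ w, a ∈ (X : Set G)) → F w.prod ≤ M * w.length := by
    intro w
    induction w with
    | nil => intro _; simp [hF1]
    | cons c l ih =>
      intro h
      have hc := h c (List.mem_cons_self)
      have hl := ih (fun a ha => h a (List.mem_cons_of_mem _ ha))
      rw [List.prod_cons, hFmul]
      have hcle : F c ≤ M := hFle c hc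
      simp only [List.length_cons]
      push_cast
      linarith
  have heq : ∀ w : List G, (∀ a ∈ w, a = A ∨ a = B) → F w.prod = M * w.length := by
    intro w
    induction w with
    | nil => intro _; simp [hF1]
    | cons c l ih =>
      intro h
      have hc : F c = M := by
        rcases h c (List.mem_cons_self) with rfl | rfl
        · exact hFA
        · exact hFB
      have hl := ih (fun a ha => h a (List.mem_cons_of_mem _ ha))
      rw [List.prod_cons, hFmul, hc, hl]
      simp only [List.length_cons]
      push_cast
      ring
  have hgeo : ∀ w : List G, (∀ a ∈ w, a = A ∨ a = B) → IsGeodesicWord (X : Set G) w := by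
    intro w hw
    constructor
    · intro a ha
      rcases hw a ha with rfl | rfl
      · exact hA
      · exact hB
    · intro w' hw' hprod
      have h1 : F w.prod = M * w.length := heq w hw
      have h2 : F w'.prod ≤ M * w'.length := hle w' hw'
      rw [hprod, h1] at h2
      have : (w.length : ℤ) ≤ (w'.length : ℤ) := le_of_mul_le_mul_left h2 hM
      exact_mod_cast this
  refine ⟨2, one_lt_two, 0, ?_⟩
  intro n _
  have hfin : {w : List G | IsGeodesicWord (X : Set G) w ∧ w.length ≤ n}.Finite := by
    have h1 : {l : List (↥X) | l.length ≤ n}.Finite := List.finite_length_le _ n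
    refine (h1.image (fun l : List (↥X) => l.map Subtype.val)).subset ?_
    rintro w ⟨⟨hmem, _⟩, hlen⟩
    refine ⟨w.pmap (fun a h => (⟨a, h⟩ : ↥X)) (fun a ha => hmem a ha), ?_, ?_⟩
    · simpa using hlen
    · show List.map Subtype.val (w.pmap (fun a h => (⟨a, h⟩ : ↥X)) (fun a ha => hmem a ha)) = w
      rw [List.map_pmap]
      simp
  have hcard : 2 ^ n ≤ geodesicGrowth (X : Set G) n := by
    rw [geodesicGrowth]
    have hinj : Function.Injective
        (fun v : Fin n → Bool => (List.ofFn v).map (fun i => if i then A else B)) := by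
      intro v1 v2 h
      apply List.ofFn_injective
      refine List.map_injective_iff.mpr ?_ h
      intro x y hxy
      cases x <;> cases y <;> simp_all
    have hmaps : ∀ v ∈ (Set.univ : Set (Fin n → Bool)),
        (fun v : Fin n → Bool => (List.ofFn v).map (fun i => if i then A else B)) v ∈
          {w : List G | IsGeodesicWord (X : Set G) w ∧ w.length ≤ n} := by
      intro v _
      constructor
      · apply hgeo
        intro a ha
        rw [List.mem_map] at ha
        obtain ⟨i, _, hi⟩ := ha
        by_cases h : i
        · left; rw [← hi]; simp [h]
        · right; rw [← hi]; simp [h]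
      · simp
    have := Set.ncard_le_ncard_of_injOn _ hmaps (hinj.injOn) hfin
    calc 2 ^ n = (Set.univ : Set (Fin n → Bool)).ncard := by
          rw [Set.ncard_univ, Nat.card_eq_fintype_card]
          simp
      _ ≤ _ := this
  calc (2 : ℝ) ^ n = ((2 ^ n : ℕ) : ℝ) := by push_cast; ring
    _ ≤ _ := Nat.cast_le.mpr hcard
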